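/- arXiv:2510.01874 — 4 statements merged into one kernel-verified Lean document; each statement's English description precedes it below -/
import Mathlib

section
/- Let (X, d) be a metric space, let Y ⊆ ℝ be a nonempty compact subset, and let Q : X × Y → ℝ be continuous. Define f : X → ℝ by f(x) = inf { y ∈ Y : Q(x, y) = sup_{y' ∈ Y} Q(x, y') }, i.e., f(x) is the infimum of the set of maximizers of Q(x, ·) over Y. Then f is lower semicontinuous. -/
open Filter Topology

/-- The argmax set is nonempty and contains its infimum. -/
lemma stmt2_aux {X : Type*} [MetricSpace X]
    (Y : Set ℝ) (hYne : Y.Nonempty) (hYcomp : IsCompact Y)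
    (Q : X × ℝ → ℝ) (hQ : ContinuousOn Q (Set.univ ×ˢ Y)) (x : X) :
    sInf {y : ℝ | y ∈ Y ∧ ∀ y' ∈ Y, Q (x, y') ≤ Q (x, y)} ∈
      {y : ℝ | y ∈ Y ∧ ∀ y' ∈ Y, Q (x, y') ≤ Q (x, y)} := by
  have hg : ContinuousOn (fun y => Q (x, y)) Y := by
    apply hQ.comp (Continuous.continuousOn (by continuity))
    intro y hy
    exact ⟨Set.mem_univ _, hy⟩
  obtain ⟨y₀, hy₀Y, hy₀max⟩ := hYcomp.exists_isMaxOn hYne hg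
  have hset : {y : ℝ | y ∈ Y ∧ ∀ y' ∈ Y, Q (x, y') ≤ Q (x, y)} =
      Y ∩ (fun y => Q (x, y)) ⁻¹' {Q (x, y₀)} := by
    ext y
    simp only [Set.mem_setOf_eq, Set.mem_inter_iff, Set.mem_preimage, Set.mem_singleton_iff]
    constructor
    · rintro ⟨hyY, hmax⟩
      exact ⟨hyY, le_antisymm (hy₀max hyY) (hmax y₀ hy₀Y)⟩
    · rintro ⟨hyY, heq⟩
      exact ⟨hyY, fun y' hy' => heq ▸ hy₀max hy'⟩
  have hclosed : IsClosed (Y ∩ (fun y => Q (x, y)) ⁻¹' {Q (x, y₀)}) :=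
    hg.preimage_isClosed_of_isClosed hYcomp.isClosed isClosed_singleton
  have hcomp : IsCompact {y : ℝ | y ∈ Y ∧ ∀ y' ∈ Y, Q (x, y') ≤ Q (x, y)} := by
    rw [hset]
    exact hYcomp.of_isClosed_subset hclosed Set.inter_subset_left
  have hne : {y : ℝ | y ∈ Y ∧ ∀ y' ∈ Y, Q (x, y') ≤ Q (x, y)}.Nonempty :=
    ⟨y₀, hy₀Y, fun y' hy' => hy₀max hy'⟩
  exact hcomp.sInf_mem hne

/-- Let X be a metric space, Y ⊆ ℝ nonempty compact, Q : X × Y → ℝ continuous.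
Then f(x) = inf (argmax Q(x, ·)) is lower semicontinuous. The argmax set is expressed as
{y ∈ Y | ∀ y' ∈ Y, Q (x, y') ≤ Q (x, y)}, i.e. the set of maximizers of Q(x, ·) over Y. -/
theorem stmt2 {X : Type*} [MetricSpace X]
    (Y : Set ℝ) (hYne : Y.Nonempty) (hYcomp : IsCompact Y)
    (Q : X × ℝ → ℝ) (hQ : ContinuousOn Q (Set.univ ×ˢ Y)) :
    LowerSemicontinuous fun x : X =>
      sInf {y : ℝ | y ∈ Y ∧ ∀ y' ∈ Y, Q (x, y') ≤ Q (x, y)} := by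
  set f : X → ℝ := fun x => sInf {y : ℝ | y ∈ Y ∧ ∀ y' ∈ Y, Q (x, y') ≤ Q (x, y)} with hf
  intro x t ht
  by_contra h
  rw [Filter.not_eventually] at h
  have h' : ∃ᶠ x' in 𝓝 x, f x' ≤ t := h.mono fun x' hx' => not_lt.mp hx'
  obtain ⟨u, hu, hut⟩ := exists_seq_forall_of_frequently h'
  -- y n is the inf of the argmax set at u n
  set y : ℕ → ℝ := fun n => f (u n) with hy
  have hmem : ∀ n, y n ∈ {z : ℝ | z ∈ Y ∧ ∀ y' ∈ Y, Q (u n, y') ≤ Q (u n, z)} :=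
    fun n => stmt2_aux Y hYne hYcomp Q hQ (u n)
  obtain ⟨z, hzY, φ, hφ, hφtend⟩ := hYcomp.tendsto_subseq (fun n => (hmem n).1)
  -- z ≤ t
  have hzt : z ≤ t := le_of_tendsto hφtend (Eventually.of_forall fun n => hut (φ n))
  -- z is a maximizer at x
  have hzmax : ∀ y' ∈ Y, Q (x, y') ≤ Q (x, z) := by
    intro y' hy'
    have huφ : Tendsto (u ∘ φ) atTop (𝓝 x) := hu.comp hφ.tendsto_atTop
    have h1 : Tendsto (fun n => Q (u (φ n), y')) atTop (𝓝 (Q (x, y'))) := by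
      have hc : ContinuousWithinAt Q (Set.univ ×ˢ Y) (x, y') :=
        hQ (x, y') ⟨Set.mem_univ _, hy'⟩
      apply hc.tendsto.comp
      rw [tendsto_nhdsWithin_iff]
      exact ⟨(huφ.prodMk_nhds tendsto_const_nhds),
        Eventually.of_forall fun n => ⟨Set.mem_univ _, hy'⟩⟩
    have h2 : Tendsto (fun n => Q (u (φ n), y (φ n))) atTop (𝓝 (Q (x, z))) := by
      have hc : ContinuousWithinAt Q (Set.univ ×ˢ Y) (x, z) :=
        hQ (x, z) ⟨Set.mem_univ _, hzY⟩
      apply hc.tendsto.comp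
      rw [tendsto_nhdsWithin_iff]
      exact ⟨(huφ.prodMk_nhds hφtend),
        Eventually.of_forall fun n => ⟨Set.mem_univ _, (hmem (φ n)).1⟩⟩
    exact le_of_tendsto_of_tendsto h1 h2
      (Eventually.of_forall fun n => (hmem (φ n)).2 y' hy')
  -- hence f x ≤ z ≤ t < f x
  have hfx : f x ≤ z := by
    have hbdd : BddBelow {w : ℝ | w ∈ Y ∧ ∀ y' ∈ Y, Q (x, y') ≤ Q (x, w)} :=
      hYcomp.bddBelow.mono fun w hw => hw.1
    exact csInf_le hbdd ⟨hzY, hzmax⟩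
  exact absurd (lt_of_le_of_lt (hfx.trans hzt) ht) (lt_irrefl _)
end

section
/- Let (X, d) be a metric space, let Y ⊆ ℝ be a nonempty compact subset, and let Q : X × Y → ℝ be continuous. Then the function f : X → ℝ defined by f(x) = inf { y ∈ Y : Q(x, y) = sup_{y' ∈ Y} Q(x, y') } is Borel measurable. -/
open Set

/-- Let X be a metric space, Y ⊆ ℝ nonempty compact, Q : X × ℝ → ℝ continuous.
Then f(x) = inf (argmax Q(x, ·)) is Borel measurable (Borel σ-algebras from the metric
topology on X and the standard topology on ℝ). -/
theorem stmt3 {X : Type*} [MetricSpace X] [MeasurableSpace X] [BorelSpace X]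
    (Y : Set ℝ) (hYne : Y.Nonempty) (hYcomp : IsCompact Y)
    (Q : X × ℝ → ℝ) (hQ : ContinuousOn Q (Set.univ ×ˢ Y)) :
    Measurable fun x : X =>
      sInf {y : ℝ | y ∈ Y ∧ ∀ y' ∈ Y, Q (x, y') ≤ Q (x, y)} := by
  -- Extend Q to a continuous function on X × ℝ by Tietze
  have hclosed : IsClosed ((Set.univ : Set X) ×ˢ Y) :=
    isClosed_univ.prod hYcomp.isClosed
  obtain ⟨g, hg⟩ := ContinuousMap.exists_restrict_eq hclosed
    ⟨_, hQ.restrict⟩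
  have hgQ : ∀ x : X, ∀ y ∈ Y, g (x, y) = Q (x, y) := by
    intro x y hy
    have := congrFun (congrArg DFunLike.coe hg) ⟨(x, y), ⟨trivial, hy⟩⟩
    exact this
  -- The argmax set, rewritten with g
  set A : X → Set ℝ := fun x => {y : ℝ | y ∈ Y ∧ ∀ y' ∈ Y, Q (x, y') ≤ Q (x, y)} with hA
  have hAg : ∀ x, A x = {y : ℝ | y ∈ Y ∧ ∀ y' ∈ Y, g (x, y') ≤ g (x, y)} := by
    intro x
    ext y
    simp only [hA, mem_setOf_eq]
    constructor
    · rintro ⟨hy, h⟩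
      exact ⟨hy, fun y' hy' => by rw [hgQ x y' hy', hgQ x y hy]; exact h y' hy'⟩
    · rintro ⟨hy, h⟩
      exact ⟨hy, fun y' hy' => by rw [← hgQ x y' hy', ← hgQ x y hy]; exact h y' hy'⟩
  have hgc : Continuous g := g.continuous
  have hgc1 : ∀ x : X, Continuous fun y => g (x, y) :=
    fun x => hgc.comp (continuous_const.prodMk continuous_id)
  -- A x is nonempty and compact
  have hAne : ∀ x, (A x).Nonempty := by
    intro x
    obtain ⟨y, hy, hmax⟩ := hYcomp.exists_isMaxOn hYne (hgc1 x).continuousOn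
    refine ⟨y, ?_⟩
    rw [hAg]
    exact ⟨hy, fun y' hy' => hmax hy'⟩
  have hAcomp : ∀ x, IsCompact (A x) := by
    intro x
    rw [hAg]
    have : {y : ℝ | y ∈ Y ∧ ∀ y' ∈ Y, g (x, y') ≤ g (x, y)}
        = Y ∩ ⋂ y' ∈ Y, {y : ℝ | g (x, y') ≤ g (x, y)} := by
      ext y; simp [mem_iInter]
    rw [this]
    refine hYcomp.inter_right (isClosed_biInter fun y' _ => ?_)
    exact isClosed_le continuous_const (hgc1 x)
  have hmem : ∀ x, sInf (A x) ∈ A x := fun x => (hAcomp x).sInf_mem (hAne x)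
  -- sup functions
  set M : X → ℝ := fun x => sSup ((fun y => g (x, y)) '' Y) with hM
  have hMcont : Continuous M :=
    hYcomp.continuous_sSup (f := fun x y => g (x, y)) (by exact hgc)
  have hMeq : ∀ x, ∀ y ∈ A x, g (x, y) = M x := by
    intro x y hy
    rw [hAg] at hy
    refine (IsGreatest.csSup_eq ⟨mem_image_of_mem (fun y => g (x, y)) hy.1, ?_⟩).symm
    rintro z ⟨y', hy', rfl⟩
    exact hy.2 y' hy'
  -- measurable via sublevel sets
  apply measurable_of_Iic
  intro a
  set K : Set ℝ := Y ∩ Iic a with hK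
  have hKcomp : IsCompact K := hYcomp.inter_right isClosed_Iic
  rcases eq_empty_or_nonempty K with hKe | hKne
  · have : (fun x : X => sInf (A x)) ⁻¹' Iic a = ∅ := by
      ext x
      simp only [mem_preimage, mem_Iic, mem_empty_iff_false, iff_false]
      intro h
      have : sInf (A x) ∈ K := ⟨(hmem x).1, h⟩
      rw [hKe] at this
      exact this
    exact this ▸ MeasurableSet.empty
  · set ga : X → ℝ := fun x => sSup ((fun y => g (x, y)) '' K) with hga
    have hgacont : Continuous ga :=
      hKcomp.continuous_sSup (f := fun x y => g (x, y)) (by exact hgc)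
    have key : (fun x : X => sInf (A x)) ⁻¹' Iic a = {x | M x ≤ ga x} := by
      ext x
      simp only [mem_preimage, mem_Iic, mem_setOf_eq]
      constructor
      · intro h
        have h1 : sInf (A x) ∈ K := ⟨(hmem x).1, h⟩
        calc M x = g (x, sInf (A x)) := (hMeq x _ (hmem x)).symm
          _ ≤ ga x := le_csSup (hKcomp.bddAbove_image (hgc1 x).continuousOn)
              (mem_image_of_mem _ h1)
      · intro h
        obtain ⟨y, hyK, hmax⟩ := hKcomp.exists_isMaxOn hKne (hgc1 x).continuousOn
        have hya : ga x = g (x, y) :=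
          IsGreatest.csSup_eq ⟨mem_image_of_mem _ hyK, by
            rintro z ⟨y', hy', rfl⟩; exact hmax hy'⟩
        have hyA : y ∈ A x := by
          rw [hAg]
          refine ⟨hyK.1, fun y' hy' => ?_⟩
          calc g (x, y') ≤ M x := le_csSup (hYcomp.bddAbove_image (hgc1 x).continuousOn)
                (mem_image_of_mem _ hy')
            _ ≤ ga x := h
            _ = g (x, y) := hya
        calc sInf (A x) ≤ y := csInf_le (hYcomp.bddBelow.mono fun z hz => ((hAg x) ▸ hz).1) hyA
          _ ≤ a := hyK.2
    rw [key]
    exact (isClosed_le hMcont hgacont).measurableSet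
end

section
/- Let a ≤ b be reals and let f : [a,b] → ℝ be continuous. Assume that every local maximum point of f relative to [a,b] is a global maximum point (i.e., whenever x ∈ [a,b] has a relative neighborhood U in [a,b] with f(x) ≥ f(y) for all y ∈ U, then f(x) = max_{[a,b]} f). Then for every x₀ ∈ [a,b] there exists a global maximizer x* ∈ [a,b] of f such that the map t ↦ f((1−t)x₀ + t x*) is monotone non-decreasing on [0,1]; in other words, f is monotone along the straight segment from x₀ to some global maximum, so a non-decreasing continuous path from any action to an optimal action exists. -/
open Set

private lemma interior_global (a b : ℝ) (f : ℝ → ℝ)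
    (hloc : ∀ x ∈ Set.Icc a b,
      (∃ ε > 0, ∀ y ∈ Set.Icc a b, |y - x| < ε → f y ≤ f x) →
        ∀ y ∈ Set.Icc a b, f y ≤ f x)
    {p w v : ℝ} (hpa : a ≤ p) (hvb : v ≤ b) (hpw : p < w) (hwv : w < v)
    (hmax : ∀ y ∈ Set.Icc p v, f y ≤ f w) : ∀ y ∈ Set.Icc a b, f y ≤ f w := by
  refine hloc w ⟨by linarith, by linarith⟩
    ⟨min (w - p) (v - w), lt_min (by linarith) (by linarith), ?_⟩
  intro y hy hlt
  obtain ⟨h1, h2⟩ := abs_lt.mp hlt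
  have h3 := min_le_left (w - p) (v - w)
  have h4 := min_le_right (w - p) (v - w)
  exact hmax y ⟨by linarith, by linarith⟩

private lemma left_global (a b : ℝ) (f : ℝ → ℝ)
    (hloc : ∀ x ∈ Set.Icc a b,
      (∃ ε > 0, ∀ y ∈ Set.Icc a b, |y - x| < ε → f y ≤ f x) →
        ∀ y ∈ Set.Icc a b, f y ≤ f x)
    {v : ℝ} (hvb : v ≤ b) (hav : a < v)
    (hmax : ∀ y ∈ Set.Icc a v, f y ≤ f a) : ∀ y ∈ Set.Icc a b, f y ≤ f a := by
  refine hloc a ⟨le_refl a, by linarith⟩ ⟨v - a, by linarith, ?_⟩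
  intro y hy hlt
  obtain ⟨h1, h2⟩ := abs_lt.mp hlt
  exact hmax y ⟨hy.1, by linarith⟩

private lemma right_global (a b : ℝ) (f : ℝ → ℝ)
    (hloc : ∀ x ∈ Set.Icc a b,
      (∃ ε > 0, ∀ y ∈ Set.Icc a b, |y - x| < ε → f y ≤ f x) →
        ∀ y ∈ Set.Icc a b, f y ≤ f x)
    {p : ℝ} (hpa : a ≤ p) (hpb : p < b)
    (hmax : ∀ y ∈ Set.Icc p b, f y ≤ f b) : ∀ y ∈ Set.Icc a b, f y ≤ f b := by
  refine hloc b ⟨by linarith, le_refl b⟩ ⟨b - p, by linarith, ?_⟩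
  intro y hy hlt
  obtain ⟨h1, h2⟩ := abs_lt.mp hlt
  exact hmax y ⟨by linarith, hy.2⟩

private lemma seg_mem_right {x₀ xs t : ℝ} (hle : x₀ ≤ xs) (ht : t ∈ Set.Icc (0:ℝ) 1) :
    (1 - t) * x₀ + t * xs ∈ Set.Icc x₀ xs := by
  obtain ⟨h0, h1⟩ := ht
  constructor <;> nlinarith

private lemma seg_mem_left {x₀ xs t : ℝ} (hle : xs ≤ x₀) (ht : t ∈ Set.Icc (0:ℝ) 1) :
    (1 - t) * x₀ + t * xs ∈ Set.Icc xs x₀ := by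
  obtain ⟨h0, h1⟩ := ht
  constructor <;> nlinarith

/-- If f : [a,b] → ℝ is continuous and every local maximum point of f
relative to [a,b] is a global maximum point, then from every x₀ ∈ [a,b] there is a global
maximizer x* ∈ [a,b] such that t ↦ f((1−t)x₀ + t·x*) is monotone non-decreasing on [0,1]. -/
theorem stmt10 (a b : ℝ) (hab : a ≤ b) (f : ℝ → ℝ)
    (hf : ContinuousOn f (Set.Icc a b))
    (hloc : ∀ x ∈ Set.Icc a b,
      (∃ ε > 0, ∀ y ∈ Set.Icc a b, |y - x| < ε → f y ≤ f x) →
        ∀ y ∈ Set.Icc a b, f y ≤ f x) :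
    ∀ x₀ ∈ Set.Icc a b, ∃ xs ∈ Set.Icc a b,
      (∀ y ∈ Set.Icc a b, f y ≤ f xs) ∧
        MonotoneOn (fun t : ℝ => f ((1 - t) * x₀ + t * xs)) (Set.Icc (0 : ℝ) 1) := by
  intro x₀ hx₀
  obtain ⟨z₀, hz₀, hz₀max⟩ := isCompact_Icc.exists_isMaxOn (Set.nonempty_Icc.mpr hab) hf
  by_cases hx₀S : ∀ y ∈ Set.Icc a b, f y ≤ f x₀
  · refine ⟨x₀, hx₀, hx₀S, ?_⟩
    have heq : (fun t : ℝ => f ((1 - t) * x₀ + t * x₀)) = fun _ : ℝ => f x₀ := by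
      funext t; ring_nf
    rw [heq]
    exact monotoneOn_const
  · set S : Set ℝ := Set.Icc a b ∩ f ⁻¹' Set.Ici (f z₀) with hSdef
    have hmem : ∀ {x}, x ∈ S → x ∈ Set.Icc a b ∧ ∀ y ∈ Set.Icc a b, f y ≤ f x :=
      fun hx => ⟨hx.1, fun y hy => le_trans (hz₀max hy) hx.2⟩
    have hmem' : ∀ {x}, x ∈ Set.Icc a b → (∀ y ∈ Set.Icc a b, f y ≤ f x) → x ∈ S :=
      fun hx h => ⟨hx, h z₀ hz₀⟩
    have hSclosed : IsClosed S := hf.preimage_isClosed_of_isClosed isClosed_Icc isClosed_Ici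
    have hx₀notS : x₀ ∉ S := fun h => hx₀S (hmem h).2
    have getmax : ∀ p v : ℝ, a ≤ p → v ≤ b → p ≤ v →
        ∃ w ∈ Set.Icc p v, ∀ y ∈ Set.Icc p v, f y ≤ f w := by
      intro p v hpa hvb hpv
      obtain ⟨w, hw, hwmax⟩ := isCompact_Icc.exists_isMaxOn (Set.nonempty_Icc.mpr hpv)
        (hf.mono (Set.Icc_subset_Icc hpa hvb))
      exact ⟨w, hw, fun y hy => hwmax hy⟩
    have hSrC : IsCompact (S ∩ Set.Icc x₀ b) :=
      isCompact_Icc.of_isClosed_subset (hSclosed.inter isClosed_Icc)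
        (fun x hx => (hmem hx.1).1)
    have hSlC : IsCompact (S ∩ Set.Icc a x₀) :=
      isCompact_Icc.of_isClosed_subset (hSclosed.inter isClosed_Icc)
        (fun x hx => (hmem hx.1).1)
    have key : (∃ xs ∈ S, x₀ ≤ xs ∧ MonotoneOn f (Set.Icc x₀ xs)) ∨
               (∃ xs ∈ S, xs ≤ x₀ ∧ AntitoneOn f (Set.Icc xs x₀)) := by
      by_cases hSr : (S ∩ Set.Icc x₀ b).Nonempty
      · obtain ⟨sp, hspmem, hspleast⟩ := hSrC.exists_isLeast hSr
        have hspS : sp ∈ S := hspmem.1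
        have hspx₀ : x₀ < sp := lt_of_le_of_ne hspmem.2.1
          (fun h => hx₀notS (h ▸ hspS))
        have hspb : sp ≤ b := hspmem.2.2
        by_cases hSl : (S ∩ Set.Icc a x₀).Nonempty
        · -- maximizers on both sides of x₀
          obtain ⟨sm, hsmmem, hsmgreat⟩ := hSlC.exists_isGreatest hSl
          have hsmS : sm ∈ S := hsmmem.1
          have hsmx₀ : sm < x₀ := lt_of_le_of_ne hsmmem.2.2
            (fun h => hx₀notS (h ▸ hsmS))
          have hsma : a ≤ sm := hsmmem.2.1
          by_cases hmono : MonotoneOn f (Set.Icc x₀ sp)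
          · exact Or.inl ⟨sp, hspS, hspx₀.le, hmono⟩
          · refine Or.inr ⟨sm, hsmS, hsmx₀.le, ?_⟩
            intro p hp q hq hpq
            by_contra hcon
            push_neg at hcon
            apply hmono
            intro u hu v hv huv
            by_contra hcon2
            push_neg at hcon2
            have hpq' : p < q := lt_of_le_of_ne hpq
              (fun h => by rw [h] at hcon; exact lt_irrefl _ hcon)
            have huv' : u < v := lt_of_le_of_ne huv
              (fun h => by rw [h] at hcon2; exact lt_irrefl _ hcon2)
            have hqx₀ : q ≤ x₀ := hq.2
            have hx₀u : x₀ ≤ u := hu.1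
            have hap : a ≤ p := le_trans hsma hp.1
            have hvb : v ≤ b := le_trans hv.2 hspb
            have hpv : p < v := by linarith
            obtain ⟨w, ⟨hw1, hw2⟩, hwmax⟩ := getmax p v hap hvb hpv.le
            have h1 : f q ≤ f w := hwmax q ⟨hpq, by linarith⟩
            have h2 : f u ≤ f w := hwmax u ⟨by linarith, huv⟩
            have hwp : p < w := lt_of_le_of_ne hw1
              (fun h => by rw [← h] at h1; linarith)
            have hwv : w < v := lt_of_le_of_ne hw2
              (fun h => by rw [h] at h2; linarith)
            have hwS : w ∈ S := hmem' ⟨by linarith, by linarith⟩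
              (interior_global a b f hloc hap hvb hwp hwv hwmax)
            rcases le_or_gt w x₀ with h | h
            · have hws : w ≤ sm := hsmgreat ⟨hwS, by linarith, h⟩
              have hsmp : sm ≤ p := hp.1
              linarith
            · have hws : sp ≤ w := hspleast ⟨hwS, h.le, by linarith⟩
              have hvsp : v ≤ sp := hv.2
              linarith
        · -- all maximizers are to the right of x₀
          refine Or.inl ⟨sp, hspS, hspx₀.le, ?_⟩
          intro u hu v hv huv
          by_contra hcon
          push_neg at hcon
          have huv' : u < v := lt_of_le_of_ne huv
            (fun h => by rw [h] at hcon; exact lt_irrefl _ hcon)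
          have hau : a ≤ u := le_trans hx₀.1 hu.1
          have hav : a < v := by linarith
          have hvb : v ≤ b := le_trans hv.2 hspb
          obtain ⟨w, ⟨hw1, hw2⟩, hwmax⟩ := getmax a v (le_refl a) hvb hav.le
          have h2 : f u ≤ f w := hwmax u ⟨hau, huv⟩
          have hwv : w < v := lt_of_le_of_ne hw2
            (fun h => by rw [h] at h2; linarith)
          have hwS : w ∈ S := by
            rcases eq_or_lt_of_le hw1 with h | h
            · subst h
              exact hmem' ⟨le_refl a, hab⟩ (left_global a b f hloc hvb hav hwmax)
            · exact hmem' ⟨by linarith, by linarith⟩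
                (interior_global a b f hloc (le_refl a) hvb h hwv hwmax)
          rcases le_or_gt x₀ w with h | h
          · have hws : sp ≤ w := hspleast ⟨hwS, h, by linarith⟩
            have hvsp : v ≤ sp := hv.2
            linarith
          · exact hSl ⟨w, hwS, hw1, h.le⟩
      · -- all maximizers are to the left of x₀
        have hSl : (S ∩ Set.Icc a x₀).Nonempty := by
          rcases le_or_gt z₀ x₀ with h | h
          · exact ⟨z₀, hmem' hz₀ (fun y hy => hz₀max hy), hz₀.1, h⟩
          · exact absurd ⟨z₀, hmem' hz₀ (fun y hy => hz₀max hy), h.le, hz₀.2⟩ hSr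
        obtain ⟨sm, hsmmem, hsmgreat⟩ := hSlC.exists_isGreatest hSl
        have hsmS : sm ∈ S := hsmmem.1
        have hsmx₀ : sm < x₀ := lt_of_le_of_ne hsmmem.2.2
          (fun h => hx₀notS (h ▸ hsmS))
        have hsma : a ≤ sm := hsmmem.2.1
        refine Or.inr ⟨sm, hsmS, hsmx₀.le, ?_⟩
        intro u hu v hv huv
        by_contra hcon
        push_neg at hcon
        have huv' : u < v := lt_of_le_of_ne huv
          (fun h => by rw [h] at hcon; exact lt_irrefl _ hcon)
        have hvb : v ≤ b := le_trans hv.2 hx₀.2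
        have hau : a ≤ u := le_trans hsma hu.1
        have hub : u < b := by linarith
        obtain ⟨w, ⟨hw1, hw2⟩, hwmax⟩ := getmax u b hau (le_refl b) hub.le
        have h2 : f v ≤ f w := hwmax v ⟨huv, hvb⟩
        have hwu : u < w := lt_of_le_of_ne hw1
          (fun h => by rw [← h] at h2; linarith)
        have hwS : w ∈ S := by
          rcases eq_or_lt_of_le hw2 with h | h
          · rw [h]
            exact hmem' ⟨hab, le_refl b⟩ (right_global a b f hloc hau hub (h ▸ hwmax))
          · exact hmem' ⟨by linarith, by linarith⟩
              (interior_global a b f hloc hau (le_refl b) hwu h hwmax)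
        rcases le_or_gt w x₀ with h | h
        · have hws : w ≤ sm := hsmgreat ⟨hwS, by linarith, h⟩
          have hsmu : sm ≤ u := hu.1
          linarith
        · exact hSr ⟨w, hwS, h.le, hw2⟩
    rcases key with ⟨xs, hxs, hle, hm⟩ | ⟨xs, hxs, hle, hm⟩
    · refine ⟨xs, (hmem hxs).1, (hmem hxs).2, ?_⟩
      intro t1 ht1 t2 ht2 h12
      refine hm (seg_mem_right hle ht1) (seg_mem_right hle ht2) ?_
      nlinarith [ht1.1, ht1.2, ht2.1, ht2.2, mul_nonneg (sub_nonneg.mpr h12) (sub_nonneg.mpr hle)]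
    · refine ⟨xs, (hmem hxs).1, (hmem hxs).2, ?_⟩
      intro t1 ht1 t2 ht2 h12
      refine hm (seg_mem_left hle ht2) (seg_mem_left hle ht1) ?_
      nlinarith [ht1.1, ht1.2, ht2.1, ht2.2, mul_nonneg (sub_nonneg.mpr h12) (sub_nonneg.mpr hle)]
end

section
/- Consider the finite-horizon portfolio replication recursion: fix m ≥ 1, a horizon n ≥ 1, a nonempty compact convex action set A ⊆ ℝᵐ, a utility function u : ℝ → ℝ that is concave and monotone non-decreasing, a liability function Z : ℝᵐ → ℝ, cost functions c_k : ℝᵐ × ℝᵐ → ℝ (k = 0,…,n−1) such that for every fixed x ∈ ℝᵐ the map Δ ↦ c_k(Δ, x) is convex, and Markov probability kernels λ_k from ℝᵐ to ℝᵐ (k = 0,…,n−1) governing the action-independent price transitions. Define h(δ, a, x) = δ⁰ − (a − δ^(1:m))·x and g_k(w, δ, δ', x, x') = w − δ·(1,x) + δ'·(1,x') − c_k(δ'^(1:m) − δ^(1:m), x) for δ, δ' ∈ ℝ^(1+m). Define value and action-value functions backwards by V_n(δ, x, w) = u(w + Z(x)), and for k < n: Q_k(δ, x, w, a) = ∫ V_{k+1}((h(δ,a,x),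 a), x', g_k(w, δ, (h(δ,a,x), a), x, x')) d(λ_k x)(x') and V_k(δ, x, w) = max_{a ∈ A} Q_k(δ, x, w, a). Assume that all these integrals are finite and all the maxima over A are attained. Then for every k < n and every fixed price x ∈ ℝᵐ, the map (δ, w, a) ↦ Q_k(δ, x, w, a) is jointly concave, Q_k is monotone non-decreasing in w and in the cash coordinate δ⁰, and in particular the optimal action-value function a ↦ Q_k(δ, x, w, a) is concave in the action argument; moreover for every k ≤ n and fixed x, the map (δ, w) ↦ V_k(δ, x, w) is concave and monotone non-decreasing in w and in δ⁰. -/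
open MeasureTheory

section Aux

variable {m : ℕ}


private def Vgood (V : ℕ → (ℝ × (Fin m → ℝ)) → (Fin m → ℝ) → ℝ → ℝ) (k : ℕ) : Prop :=
  ∀ xp : Fin m → ℝ,
    ConcaveOn ℝ (Set.univ : Set ((ℝ × (Fin m → ℝ)) × ℝ))
        (fun p : (ℝ × (Fin m → ℝ)) × ℝ => V k p.1 xp p.2) ∧
      (∀ δ : ℝ × (Fin m → ℝ), Monotone fun w : ℝ => V k δ xp w) ∧
      (∀ (δ1m : Fin m → ℝ) (w : ℝ), Monotone fun δ0 : ℝ => V k (δ0, δ1m) xp w)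

private def Qgood (A : Set (Fin m → ℝ))
    (Q : ℕ → (ℝ × (Fin m → ℝ)) → (Fin m → ℝ) → ℝ → (Fin m → ℝ) → ℝ) (k : ℕ) : Prop :=
  ∀ xp : Fin m → ℝ,
    ConcaveOn ℝ ((Set.univ : Set (ℝ × (Fin m → ℝ))) ×ˢ (Set.univ : Set ℝ) ×ˢ A)
        (fun p : (ℝ × (Fin m → ℝ)) × ℝ × (Fin m → ℝ) => Q k p.1 xp p.2.1 p.2.2) ∧
      (∀ (δ : ℝ × (Fin m → ℝ)) (a : Fin m → ℝ), a ∈ A →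
        Monotone fun w : ℝ => Q k δ xp w a) ∧
      (∀ (δ1m : Fin m → ℝ) (w : ℝ) (a : Fin m → ℝ), a ∈ A →
        Monotone fun δ0 : ℝ => Q k (δ0, δ1m) xp w a) ∧
      (∀ (δ : ℝ × (Fin m → ℝ)) (w : ℝ),
        ConcaveOn ℝ A fun a : Fin m → ℝ => Q k δ xp w a)

private lemma stepQ {n : ℕ} {A : Set (Fin m → ℝ)} (hAconv : Convex ℝ A)
    {c : ℕ → (Fin m → ℝ) → (Fin m → ℝ) → ℝ}
    (hc : ∀ k < n, ∀ xp : Fin m → ℝ, ConvexOn ℝ Set.univ fun Δ : Fin m → ℝ => c k Δ xp)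
    {κ : ℕ → (Fin m → ℝ) → Measure (Fin m → ℝ)}
    {V : ℕ → (ℝ × (Fin m → ℝ)) → (Fin m → ℝ) → ℝ → ℝ}
    {Q : ℕ → (ℝ × (Fin m → ℝ)) → (Fin m → ℝ) → ℝ → (Fin m → ℝ) → ℝ}
    (hint : ∀ k < n, ∀ (δ : ℝ × (Fin m → ℝ)) (xp : Fin m → ℝ) (w : ℝ) (a : Fin m → ℝ),
      Integrable
        (fun x' : Fin m → ℝ =>
          V (k + 1) (δ.1 - ∑ i, (a i - δ.2 i) * xp i, a) x'
            (w - (δ.1 + ∑ i, δ.2 i * xp i)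
              + ((δ.1 - ∑ i, (a i - δ.2 i) * xp i) + ∑ i, a i * x' i)
              - c k (a - δ.2) xp))
        (κ k xp))
    (hQdef : ∀ k < n, ∀ (δ : ℝ × (Fin m → ℝ)) (xp : Fin m → ℝ) (w : ℝ) (a : Fin m → ℝ),
      Q k δ xp w a =
        ∫ x', V (k + 1) (δ.1 - ∑ i, (a i - δ.2 i) * xp i, a) x'
            (w - (δ.1 + ∑ i, δ.2 i * xp i)
              + ((δ.1 - ∑ i, (a i - δ.2 i) * xp i) + ∑ i, a i * x' i)
              - c k (a - δ.2) xp) ∂(κ k xp))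
    {k : ℕ} (hk : k < n) (ihV : Vgood V (k + 1)) : Qgood A Q k := by
  intro xp
  set F : ((ℝ × (Fin m → ℝ)) × ℝ × (Fin m → ℝ)) → (Fin m → ℝ) → ℝ := fun p x' =>
    V (k + 1) (p.1.1 - ∑ i, (p.2.2 i - p.1.2 i) * xp i, p.2.2) x'
      (p.2.1 - (p.1.1 + ∑ i, p.1.2 i * xp i)
        + ((p.1.1 - ∑ i, (p.2.2 i - p.1.2 i) * xp i) + ∑ i, p.2.2 i * x' i)
        - c k (p.2.2 - p.1.2) xp) with hF
  have hQF : ∀ p : (ℝ × (Fin m → ℝ)) × ℝ × (Fin m → ℝ),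
      Q k p.1 xp p.2.1 p.2.2 = ∫ x', F p x' ∂(κ k xp) := fun p =>
    hQdef k hk p.1 xp p.2.1 p.2.2
  have hintF : ∀ p : (ℝ × (Fin m → ℝ)) × ℝ × (Fin m → ℝ), Integrable (F p) (κ k xp) :=
    fun p => hint k hk p.1 xp p.2.1 p.2.2
  -- pointwise concavity of the integrand
  have hpt : ∀ p q : (ℝ × (Fin m → ℝ)) × ℝ × (Fin m → ℝ), ∀ α β : ℝ,
      0 ≤ α → 0 ≤ β → α + β = 1 → ∀ x',
      α * F p x' + β * F q x' ≤ F (α • p + β • q) x' := by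
    rintro ⟨⟨p0, p1⟩, pw, pa⟩ ⟨⟨q0, q1⟩, qw, qa⟩ α β hα hβ hαβ x'
    have hcomb : α • (((p0, p1), pw, pa) : (ℝ × (Fin m → ℝ)) × ℝ × (Fin m → ℝ))
        + β • ((q0, q1), qw, qa)
        = ((α * p0 + β * q0, α • p1 + β • q1), α * pw + β * qw, α • pa + β • qa) := rfl
    rw [hcomb]
    simp only [hF]
    have e1 : ∑ i, ((α • pa + β • qa) i - (α • p1 + β • q1) i) * xp i
        = α * ∑ i, (pa i - p1 i) * xp i + β * ∑ i, (qa i - q1 i) * xp i := by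
      rw [Finset.mul_sum, Finset.mul_sum, ← Finset.sum_add_distrib]
      refine Finset.sum_congr rfl fun i _ => ?_
      simp only [Pi.add_apply, Pi.smul_apply, smul_eq_mul]; ring
    have e2 : ∑ i, (α • p1 + β • q1) i * xp i
        = α * ∑ i, p1 i * xp i + β * ∑ i, q1 i * xp i := by
      rw [Finset.mul_sum, Finset.mul_sum, ← Finset.sum_add_distrib]
      refine Finset.sum_congr rfl fun i _ => ?_
      simp only [Pi.add_apply, Pi.smul_apply, smul_eq_mul]; ring
    have e3 : ∑ i, (α • pa + β • qa) i * x' i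
        = α * ∑ i, pa i * x' i + β * ∑ i, qa i * x' i := by
      rw [Finset.mul_sum, Finset.mul_sum, ← Finset.sum_add_distrib]
      refine Finset.sum_congr rfl fun i _ => ?_
      simp only [Pi.add_apply, Pi.smul_apply, smul_eq_mul]; ring
    have e4 : (α • pa + β • qa) - (α • p1 + β • q1) = α • (pa - p1) + β • (qa - q1) := by
      funext i
      simp only [Pi.sub_apply, Pi.add_apply, Pi.smul_apply, smul_eq_mul]; ring
    have hCr := (hc k hk xp).2 (Set.mem_univ (pa - p1)) (Set.mem_univ (qa - q1)) hα hβ hαβ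
    rw [← e4] at hCr
    simp only [smul_eq_mul] at hCr
    rw [e1, e2, e3]
    set Sp := ∑ i, (pa i - p1 i) * xp i
    set Sq := ∑ i, (qa i - q1 i) * xp i
    set Tp := ∑ i, p1 i * xp i
    set Tq := ∑ i, q1 i * xp i
    set Up := ∑ i, pa i * x' i
    set Uq := ∑ i, qa i * x' i
    set Cp := c k (pa - p1) xp
    set Cq := c k (qa - q1) xp
    set Cr := c k ((α • pa + β • qa) - (α • p1 + β • q1)) xp
    set Wp := pw - (p0 + Tp) + ((p0 - Sp) + Up) - Cp with hWp
    set Wq := qw - (q0 + Tq) + ((q0 - Sq) + Uq) - Cq with hWq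
    have hV := (ihV x').1.2 (Set.mem_univ (((p0 - Sp, pa), Wp) : (ℝ × (Fin m → ℝ)) × ℝ))
      (Set.mem_univ ((q0 - Sq, qa), Wq)) hα hβ hαβ
    simp only [Prod.smul_mk, Prod.mk_add_mk, smul_eq_mul] at hV
    refine le_trans hV ?_
    have ec : α * (p0 - Sp) + β * (q0 - Sq) = α * p0 + β * q0 - (α * Sp + β * Sq) := by
      ring
    rw [ec]
    have ew : α * Wp + β * Wq
        = (α * pw + β * qw - (α * p0 + β * q0 + (α * Tp + β * Tq))
            + ((α * p0 + β * q0 - (α * Sp + β * Sq)) + (α * Up + β * Uq))) - (α * Cp + β * Cq) := by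
      rw [hWp, hWq]; ring
    rw [ew]
    exact (ihV x').2.1 _ (by linarith)
  have hconcU : ConcaveOn ℝ (Set.univ : Set ((ℝ × (Fin m → ℝ)) × ℝ × (Fin m → ℝ)))
      (fun p => Q k p.1 xp p.2.1 p.2.2) := by
    refine ⟨convex_univ, ?_⟩
    rintro p - q - α β hα hβ hαβ
    simp only [smul_eq_mul]
    rw [hQF p, hQF q, hQF (α • p + β • q)]
    calc α * ∫ x', F p x' ∂(κ k xp) + β * ∫ x', F q x' ∂(κ k xp)
        = ∫ x', (α * F p x' + β * F q x') ∂(κ k xp) := by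
          rw [integral_add ((hintF p).const_mul α) ((hintF q).const_mul β),
            integral_const_mul, integral_const_mul]
      _ ≤ ∫ x', F (α • p + β • q) x' ∂(κ k xp) :=
          integral_mono (((hintF p).const_mul α).add ((hintF q).const_mul β))
            (hintF (α • p + β • q)) (fun x' => hpt p q α β hα hβ hαβ x')
  refine ⟨hconcU.subset (Set.subset_univ _) (convex_univ.prod (convex_univ.prod hAconv)),
    ?_, ?_, ?_⟩
  · intro δ a ha w w' hw
    simp only
    rw [hQdef k hk δ xp w a, hQdef k hk δ xp w' a]
    refine integral_mono (hint k hk δ xp w a) (hint k hk δ xp w' a) (fun x' => ?_)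
    exact (ihV x').2.1 _ (by linarith)
  · intro δ1m w a ha d0 d0' hd
    have hq1 : Q k (d0, δ1m) xp w a = ∫ x',
        V (k + 1) (d0 - ∑ i, (a i - δ1m i) * xp i, a) x'
          (w - (d0 + ∑ i, δ1m i * xp i)
            + ((d0 - ∑ i, (a i - δ1m i) * xp i) + ∑ i, a i * x' i)
            - c k (a - δ1m) xp) ∂(κ k xp) := hQdef k hk (d0, δ1m) xp w a
    have hq2 : Q k (d0', δ1m) xp w a = ∫ x',
        V (k + 1) (d0' - ∑ i, (a i - δ1m i) * xp i, a) x'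
          (w - (d0' + ∑ i, δ1m i * xp i)
            + ((d0' - ∑ i, (a i - δ1m i) * xp i) + ∑ i, a i * x' i)
            - c k (a - δ1m) xp) ∂(κ k xp) := hQdef k hk (d0', δ1m) xp w a
    simp only
    rw [hq1, hq2]
    refine integral_mono (hint k hk (d0, δ1m) xp w a) (hint k hk (d0', δ1m) xp w a)
      (fun x' => ?_)
    have e : w - (d0' + ∑ i, δ1m i * xp i)
        + ((d0' - ∑ i, (a i - δ1m i) * xp i) + ∑ i, a i * x' i) - c k (a - δ1m) xp
        = w - (d0 + ∑ i, δ1m i * xp i)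
        + ((d0 - ∑ i, (a i - δ1m i) * xp i) + ∑ i, a i * x' i) - c k (a - δ1m) xp := by
      ring
    simp only
    rw [e]
    exact (ihV x').2.2 a _ (by linarith)
  · intro δ w
    refine ⟨hAconv, ?_⟩
    intro a ha b hb α β hα hβ hαβ
    have h := hconcU.2 (Set.mem_univ ((δ, w, a) : (ℝ × (Fin m → ℝ)) × ℝ × (Fin m → ℝ)))
      (Set.mem_univ (δ, w, b)) hα hβ hαβ
    have e : α • ((δ, w, a) : (ℝ × (Fin m → ℝ)) × ℝ × (Fin m → ℝ)) + β • (δ, w, b)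
        = (δ, w, α • a + β • b) := by
      simp only [Prod.smul_mk, Prod.mk_add_mk, Convex.combo_self hαβ]
    rw [e] at h
    exact h

private lemma baseV {n : ℕ} {u : ℝ → ℝ} (hu_conc : ConcaveOn ℝ Set.univ u) (hu_mono : Monotone u)
    {Z : (Fin m → ℝ) → ℝ} {V : ℕ → (ℝ × (Fin m → ℝ)) → (Fin m → ℝ) → ℝ → ℝ}
    (hVn : ∀ (δ : ℝ × (Fin m → ℝ)) (xp : Fin m → ℝ) (w : ℝ), V n δ xp w = u (w + Z xp)) :
    Vgood V n := by
  intro xp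
  refine ⟨⟨convex_univ, ?_⟩, ?_, ?_⟩
  · rintro ⟨δ, w⟩ - ⟨δ', w'⟩ - α β hα hβ hαβ
    show α • V n δ xp w + β • V n δ' xp w' ≤ V n (α • δ + β • δ') xp (α * w + β * w')
    simp only [hVn, smul_eq_mul]
    have h := hu_conc.2 (Set.mem_univ (w + Z xp)) (Set.mem_univ (w' + Z xp)) hα hβ hαβ
    simp only [smul_eq_mul] at h
    have e : α * (w + Z xp) + β * (w' + Z xp) = α * w + β * w' + Z xp := by
      linear_combination (Z xp) * hαβ
    rw [← e]; exact h
  · intro δ w w' hw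
    simp only [hVn]
    exact hu_mono (by linarith)
  · intro δ1m w d0 d0' hd
    simp only [hVn]
    exact le_refl _

private lemma stepV {n : ℕ} {A : Set (Fin m → ℝ)} (hAconv : Convex ℝ A)
    {V : ℕ → (ℝ × (Fin m → ℝ)) → (Fin m → ℝ) → ℝ → ℝ}
    {Q : ℕ → (ℝ × (Fin m → ℝ)) → (Fin m → ℝ) → ℝ → (Fin m → ℝ) → ℝ}
    (hVmax : ∀ k < n, ∀ (δ : ℝ × (Fin m → ℝ)) (xp : Fin m → ℝ) (w : ℝ),
      IsGreatest ((fun a : Fin m → ℝ => Q k δ xp w a) '' A) (V k δ xp w))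
    {k : ℕ} (hk : k < n) (ihQ : Qgood A Q k) : Vgood V k := by
  intro xp
  obtain ⟨hQc, hQw, hQd0, hQa⟩ := ihQ xp
  refine ⟨⟨convex_univ, ?_⟩, ?_, ?_⟩
  · rintro ⟨δ, w⟩ - ⟨δ', w'⟩ - α β hα hβ hαβ
    obtain ⟨a, ha, hQa1⟩ := (hVmax k hk δ xp w).1
    obtain ⟨b, hb, hQb1⟩ := (hVmax k hk δ' xp w').1
    have hab : α • a + β • b ∈ A := hAconv ha hb hα hβ hαβ
    have h1 : Q k (α • δ + β • δ') xp (α * w + β * w') (α • a + β • b)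
        ≤ V k (α • δ + β • δ') xp (α * w + β * w') :=
      (hVmax k hk (α • δ + β • δ') xp (α * w + β * w')).2 (Set.mem_image_of_mem _ hab)
    have h2 := hQc.2 (show ((δ, w, a) : (ℝ × (Fin m → ℝ)) × ℝ × (Fin m → ℝ)) ∈ _ from
        ⟨Set.mem_univ _, Set.mem_univ _, ha⟩)
      (show ((δ', w', b) : (ℝ × (Fin m → ℝ)) × ℝ × (Fin m → ℝ)) ∈ _ from
        ⟨Set.mem_univ _, Set.mem_univ _, hb⟩) hα hβ hαβ
    show α • V k δ xp w + β • V k δ' xp w' ≤ V k (α • δ + β • δ') xp (α * w + β * w')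
    rw [← hQa1, ← hQb1]
    exact le_trans h2 h1
  · intro δ w w' hw
    obtain ⟨a, ha, hQa1⟩ := (hVmax k hk δ xp w).1
    calc V k δ xp w = Q k δ xp w a := hQa1.symm
      _ ≤ Q k δ xp w' a := hQw δ a ha hw
      _ ≤ V k δ xp w' := (hVmax k hk δ xp w').2 (Set.mem_image_of_mem _ ha)
  · intro δ1m w d0 d0' hd
    obtain ⟨a, ha, hQa1⟩ := (hVmax k hk (d0, δ1m) xp w).1
    calc V k (d0, δ1m) xp w = Q k (d0, δ1m) xp w a := hQa1.symm
      _ ≤ Q k (d0', δ1m) xp w a := hQd0 δ1m w a ha hd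
      _ ≤ V k (d0', δ1m) xp w := (hVmax k hk (d0', δ1m) xp w).2 (Set.mem_image_of_mem _ ha)

end Aux


/-- Concavity of the optimal action-value function in the finite-horizon
portfolio replication recursion. Holdings are δ = (δ⁰, δ^{1:m}) ∈ ℝ × ℝᵐ, prices x ∈ ℝᵐ,
wealth w ∈ ℝ, actions a ∈ A ⊆ ℝᵐ (A nonempty, compact, convex). The utility u is concave
and monotone non-decreasing, each cost Δ ↦ c_k(Δ, x) is convex, and κ_k are Markov
probability kernels for the (action-independent) price transitions. V and Q satisfy the
backward recursion: V_n(δ, x, w) = u(w + Z x),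
Q_k(δ, x, w, a) = ∫ V_{k+1}((h(δ,a,x), a), x', g_k(w, δ, (h(δ,a,x), a), x, x')) d(κ_k x)(x')
with h(δ,a,x) = δ⁰ − (a − δ^{1:m})·x the self-financing cash update and
g_k(w,δ,δ',x,x') = w − δ·(1,x) + δ'·(1,x') − c_k(δ'^{1:m} − δ^{1:m}, x) the wealth update,
all integrals finite (integrability), and V_k(δ, x, w) = max_{a ∈ A} Q_k(δ, x, w, a)
attained (IsGreatest). Conclusion: for k < n and each fixed x, (δ, w, a) ↦ Q_k is jointly
concave (on ℝ^{1+m} × ℝ × A), Q_k is monotone non-decreasing in w and in δ⁰, and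
a ↦ Q_k(δ, x, w, a) is concave on A; and for k ≤ n and each fixed x, (δ, w) ↦ V_k is
concave and monotone non-decreasing in w and in δ⁰. -/
theorem stmt11 (m n : ℕ) (hm : 1 ≤ m) (hn : 1 ≤ n)
    (A : Set (Fin m → ℝ)) (hAne : A.Nonempty) (hAcomp : IsCompact A) (hAconv : Convex ℝ A)
    (u : ℝ → ℝ) (hu_conc : ConcaveOn ℝ Set.univ u) (hu_mono : Monotone u)
    (Z : (Fin m → ℝ) → ℝ)
    (c : ℕ → (Fin m → ℝ) → (Fin m → ℝ) → ℝ)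
    (hc : ∀ k < n, ∀ xp : Fin m → ℝ, ConvexOn ℝ Set.univ fun Δ : Fin m → ℝ => c k Δ xp)
    (κ : ℕ → (Fin m → ℝ) → Measure (Fin m → ℝ))
    (hκ : ∀ (k : ℕ) (xp : Fin m → ℝ), IsProbabilityMeasure (κ k xp))
    (V : ℕ → (ℝ × (Fin m → ℝ)) → (Fin m → ℝ) → ℝ → ℝ)
    (Q : ℕ → (ℝ × (Fin m → ℝ)) → (Fin m → ℝ) → ℝ → (Fin m → ℝ) → ℝ)
    (hVn : ∀ (δ : ℝ × (Fin m → ℝ)) (xp : Fin m → ℝ) (w : ℝ), V n δ xp w = u (w + Z xp))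
    (hint : ∀ k < n, ∀ (δ : ℝ × (Fin m → ℝ)) (xp : Fin m → ℝ) (w : ℝ) (a : Fin m → ℝ),
      Integrable
        (fun x' : Fin m → ℝ =>
          V (k + 1) (δ.1 - ∑ i, (a i - δ.2 i) * xp i, a) x'
            (w - (δ.1 + ∑ i, δ.2 i * xp i)
              + ((δ.1 - ∑ i, (a i - δ.2 i) * xp i) + ∑ i, a i * x' i)
              - c k (a - δ.2) xp))
        (κ k xp))
    (hQdef : ∀ k < n, ∀ (δ : ℝ × (Fin m → ℝ)) (xp : Fin m → ℝ) (w : ℝ) (a : Fin m → ℝ),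
      Q k δ xp w a =
        ∫ x', V (k + 1) (δ.1 - ∑ i, (a i - δ.2 i) * xp i, a) x'
            (w - (δ.1 + ∑ i, δ.2 i * xp i)
              + ((δ.1 - ∑ i, (a i - δ.2 i) * xp i) + ∑ i, a i * x' i)
              - c k (a - δ.2) xp) ∂(κ k xp))
    (hVmax : ∀ k < n, ∀ (δ : ℝ × (Fin m → ℝ)) (xp : Fin m → ℝ) (w : ℝ),
      IsGreatest ((fun a : Fin m → ℝ => Q k δ xp w a) '' A) (V k δ xp w)) :
    (∀ k < n, ∀ xp : Fin m → ℝ,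
      ConcaveOn ℝ ((Set.univ : Set (ℝ × (Fin m → ℝ))) ×ˢ (Set.univ : Set ℝ) ×ˢ A)
          (fun p : (ℝ × (Fin m → ℝ)) × ℝ × (Fin m → ℝ) => Q k p.1 xp p.2.1 p.2.2) ∧
        (∀ (δ : ℝ × (Fin m → ℝ)) (a : Fin m → ℝ), a ∈ A →
          Monotone fun w : ℝ => Q k δ xp w a) ∧
        (∀ (δ1m : Fin m → ℝ) (w : ℝ) (a : Fin m → ℝ), a ∈ A →
          Monotone fun δ0 : ℝ => Q k (δ0, δ1m) xp w a) ∧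
        (∀ (δ : ℝ × (Fin m → ℝ)) (w : ℝ),
          ConcaveOn ℝ A fun a : Fin m → ℝ => Q k δ xp w a)) ∧
    (∀ k ≤ n, ∀ xp : Fin m → ℝ,
      ConcaveOn ℝ (Set.univ : Set ((ℝ × (Fin m → ℝ)) × ℝ))
          (fun p : (ℝ × (Fin m → ℝ)) × ℝ => V k p.1 xp p.2) ∧
        (∀ δ : ℝ × (Fin m → ℝ), Monotone fun w : ℝ => V k δ xp w) ∧
        (∀ (δ1m : Fin m → ℝ) (w : ℝ), Monotone fun δ0 : ℝ => V k (δ0, δ1m) xp w)) := by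
  have hbase : Vgood V n := baseV hu_conc hu_mono hVn
  have hVall : ∀ j k, k + j = n → Vgood V k := by
    intro j
    induction j with
    | zero =>
      intro k hkj
      have hkn : k = n := by omega
      rw [hkn]
      exact hbase
    | succ j ih =>
      intro k hkj
      have hk' : k < n := by omega
      exact stepV hAconv hVmax hk' (stepQ hAconv hc hint hQdef hk' (ih (k + 1) (by omega)))
  have hQall : ∀ k < n, Qgood A Q k := fun k hk =>
    stepQ hAconv hc hint hQdef hk (hVall (n - (k + 1)) (k + 1) (by omega))
  exact ⟨fun k hk xp => hQall k hk xp, fun k hk xp => hVall (n - k) k (by omega) xp⟩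
end
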